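/- Let r ≥ 1 and ℓ ≥ 1 be integers. Define h(p, r, t) = ∑_{i=0}^{p−1} C(r+t−i, r−i) for p > 0 and h(0, r, t) = 0. Then every integer γ with 0 ≤ γ < C(r+ℓ, r) has a unique representation by a vector (ρ_{ℓ−1}, …, ρ₁, ρ₀) of nonnegative integers with ∑_{i=0}^{ℓ−1} ρ_i ≤ r such that γ = ∑_{t=0}^{ℓ−1} h(ρ_t, r_t, t), where r_t = r − ∑_{q=t+1}^{ℓ−1} ρ_q. -/

import Mathlib

/-- `h(p, r, t) = ∑_{i=0}^{p−1} C(r+t−i, r−i)` (equal to `0` when `p = 0`). -/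
def hfun (p r t : ℕ) : ℕ := ∑ i ∈ Finset.range p, (r + t - i).choose (r - i)

lemma hfun_succ (p r t : ℕ) : hfun (p+1) r t = hfun p r t + (r + t - p).choose (r - p) :=
  Finset.sum_range_succ _ p

lemma hfun_strictMono (r t : ℕ) : StrictMono (fun p => hfun p r t) := by
  apply strictMono_nat_of_lt_succ
  intro p
  rw [hfun_succ]
  have : 0 < (r + t - p).choose (r - p) :=
    Nat.choose_pos (Nat.sub_le_sub_right (Nat.le_add_right r t) p)
  omega

lemma hfun_top (r t : ℕ) : hfun (r+1) r t = (r + t + 1).choose r := by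
  induction r with
  | zero => simp [hfun]
  | succ r ih =>
    have h : hfun (r+2) (r+1) t = (r + 1 + t).choose (r+1) + hfun (r+1) r t := by
      rw [hfun, Finset.sum_range_succ']
      simp only [Nat.sub_zero]
      rw [add_comm]
      congr 1
      apply Finset.sum_congr rfl
      intro i _
      congr 1 <;> omega
    rw [h, ih, show r + 1 + t = r + t + 1 by omega,
      Nat.choose_succ_succ (r+t+1) r]
    simp only [Nat.succ_eq_add_one]
    omega

def pval (l r : ℕ) (ρ : Fin l → ℕ) : ℕ :=
  ∑ t : Fin l, hfun (ρ t) (r - ∑ q ∈ Finset.Ioi t, ρ q) (t : ℕ)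

lemma sum_Ioi_last (l : ℕ) (ρ : Fin (l+1) → ℕ) :
    ∑ q ∈ Finset.Ioi (Fin.last l), ρ q = 0 := by
  apply Finset.sum_eq_zero
  intro q hq
  simp only [Finset.mem_Ioi] at hq
  exact absurd (Fin.le_last q) (not_le.mpr hq)

lemma Ioi_castSucc_eq (l : ℕ) (t : Fin l) :
    Finset.Ioi t.castSucc
      = insert (Fin.last l) ((Finset.Ioi t).image Fin.castSucc) := by
  ext q
  simp only [Finset.mem_Ioi, Finset.mem_insert, Finset.mem_image]
  constructor
  · intro hq
    induction q using Fin.lastCases with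
    | last => exact Or.inl rfl
    | cast j => exact Or.inr ⟨j, Fin.castSucc_lt_castSucc_iff.mp hq, rfl⟩
  · rintro (rfl | ⟨j, hj, rfl⟩)
    · exact Fin.castSucc_lt_last t
    · exact Fin.castSucc_lt_castSucc_iff.mpr hj

lemma sum_Ioi_castSucc (l : ℕ) (ρ : Fin (l+1) → ℕ) (t : Fin l) :
    ∑ q ∈ Finset.Ioi t.castSucc, ρ q
      = (∑ q ∈ Finset.Ioi t, Fin.init ρ q) + ρ (Fin.last l) := by
  rw [Ioi_castSucc_eq, Finset.sum_insert, Finset.sum_image]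
  · rw [add_comm]; rfl
  · intro a _ b _ h; exact Fin.castSucc_injective _ h
  · simp only [Finset.mem_image]
    rintro ⟨j, _, hj⟩
    exact absurd hj (Fin.castSucc_lt_last j).ne

lemma pval_succ (l r : ℕ) (ρ : Fin (l+1) → ℕ) :
    pval (l+1) r ρ
      = pval l (r - ρ (Fin.last l)) (Fin.init ρ) + hfun (ρ (Fin.last l)) r l := by
  unfold pval
  rw [Fin.sum_univ_castSucc]
  congr 1
  · apply Finset.sum_congr rfl
    intro t _
    rw [sum_Ioi_castSucc]
    have h : r - ((∑ q ∈ Finset.Ioi t, Fin.init ρ q) + ρ (Fin.last l))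
         = r - ρ (Fin.last l) - ∑ q ∈ Finset.Ioi t, Fin.init ρ q := by omega
    rw [h, Fin.coe_castSucc]
    rfl
  · rw [sum_Ioi_last]
    simp [Fin.val_last]

lemma sum_univ_eq_init (l : ℕ) (ρ : Fin (l+1) → ℕ) :
    ∑ i, ρ i = (∑ i, Fin.init ρ i) + ρ (Fin.last l) :=
  Fin.sum_univ_castSucc ρ

lemma pval_lt : ∀ (l r : ℕ) (ρ : Fin l → ℕ), (∑ i, ρ i ≤ r) → pval l r ρ < (r + l).choose r := by
  intro l
  induction l with
  | zero =>
    intro r ρ _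
    simp [pval]
  | succ l ih =>
    intro r ρ hs
    rw [sum_univ_eq_init] at hs
    rw [pval_succ]
    set p := ρ (Fin.last l) with hp
    have hpr : p ≤ r := by omega
    have h1 := ih (r - p) (Fin.init ρ) (by omega)
    have h2 : pval (l) (r - p) (Fin.init ρ) + hfun p r l < hfun (p+1) r l := by
      rw [hfun_succ, show r + l - p = (r - p) + l by omega]
      omega
    have h3 : hfun (p+1) r l ≤ hfun (r+1) r l :=
      (hfun_strictMono r l).monotone (by omega)
    rw [hfun_top] at h3
    rw [show r + (l + 1) = r + l + 1 by omega]
    omega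

lemma key : ∀ (l r γ : ℕ), γ < (r + l).choose r →
    ∃! ρ : Fin l → ℕ, (∑ i, ρ i ≤ r) ∧ γ = pval l r ρ := by
  intro l
  induction l with
  | zero =>
    intro r γ hγ
    simp only [Nat.add_zero, Nat.choose_self, Nat.lt_one_iff] at hγ
    subst hγ
    refine ⟨fun _ => 0, ⟨by simp, by simp [pval]⟩, fun σ _ => Subsingleton.elim σ _⟩
  | succ l ih =>
    intro r γ hγ
    rw [show r + (l + 1) = r + l + 1 by omega, ← hfun_top r l] at hγ
    set P : ℕ → Prop := fun p => hfun p r l ≤ γ with hP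
    have hP0 : P 0 := by simp [hP, hfun]
    set p := Nat.findGreatest P (r+1) with hpdef
    have hple : hfun p r l ≤ γ := Nat.findGreatest_spec (Nat.zero_le _) hP0
    have hpr : p ≤ r := by
      by_contra h
      have h1 : p ≤ r + 1 := Nat.findGreatest_le (r+1)
      have : p = r + 1 := by omega
      rw [this] at hple
      omega
    have hlt : γ < hfun (p+1) r l := by
      by_contra h
      push_neg at h
      exact Nat.findGreatest_is_greatest (P := P) (n := r+1) (k := p+1) (by omega) (by omega) h
    -- unique p with this property
    have hpuniq : ∀ p' : ℕ, hfun p' r l ≤ γ → γ < hfun (p'+1) r l → p' = p := by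
      intro p' h1 h2
      rcases lt_trichotomy p' p with h | h | h
      · have := (hfun_strictMono r l).monotone (show p' + 1 ≤ p by omega)
        omega
      · exact h
      · have := (hfun_strictMono r l).monotone (show p + 1 ≤ p' by omega)
        omega
    have hγ' : γ - hfun p r l < ((r - p) + l).choose (r - p) := by
      rw [hfun_succ, show r + l - p = (r - p) + l by omega] at hlt
      omega
    obtain ⟨ρ', ⟨hs', hv'⟩, hu'⟩ := ih (r - p) (γ - hfun p r l) hγ'
    refine ⟨Fin.snoc ρ' p, ⟨?_, ?_⟩, ?_⟩
    · rw [sum_univ_eq_init]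
      simp only [Fin.init_snoc, Fin.snoc_last]
      omega
    · rw [pval_succ]
      simp only [Fin.init_snoc, Fin.snoc_last]
      omega
    · rintro σ ⟨hsσ, hvσ⟩
      rw [sum_univ_eq_init] at hsσ
      rw [pval_succ] at hvσ
      set p' := σ (Fin.last l) with hp'
      have hp'r : p' ≤ r := by omega
      have hbound := pval_lt l (r - p') (Fin.init σ) (by omega)
      have hle' : hfun p' r l ≤ γ := by omega
      have hlt' : γ < hfun (p'+1) r l := by
        rw [hfun_succ, show r + l - p' = (r - p') + l by omega]
        omega
      have hpp : p' = p := hpuniq p' hle' hlt'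
      have hσ' : Fin.init σ = ρ' := by
        apply hu'
        constructor
        · rw [← hpp]; omega
        · rw [← hpp]; omega
      have : σ = Fin.snoc (Fin.init σ) (σ (Fin.last l)) := (Fin.snoc_init_self σ).symm
      rw [this, hσ', ← hp', hpp]

/-- Every integer `0 ≤ γ < C(r+ℓ, r)` has a unique representation by a
vector `(ρ_{ℓ−1}, …, ρ₀)` of nonnegative integers with `∑ ρ_i ≤ r` such that
`γ = ∑_{t=0}^{ℓ−1} h(ρ_t, r_t, t)`, where `r_t = r − ∑_{q=t+1}^{ℓ−1} ρ_q`. -/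
theorem stmt_7 (r l : ℕ) (hr : 1 ≤ r) (hl : 1 ≤ l)
    (γ : ℕ) (hγ : γ < (r + l).choose r) :
    ∃! ρ : Fin l → ℕ, (∑ i, ρ i ≤ r) ∧
      γ = ∑ t : Fin l, hfun (ρ t) (r - ∑ q ∈ Finset.Ioi t, ρ q) (t : ℕ) :=
  key l r γ hγ
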